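/- The number of distinct subsequences of the alternating binary word ACAC... of length t' = t that have length exactly t - r equals the binomial sum: sum over i from 0 to r of C(t - r, i), provided r <= t - r. -/

import Mathlib

open List Finset

/-- The `q`-bonacci numbers: `F_q(0)=1`, `F_q(t)=2^(t-1)` for `1 ≤ t ≤ q`,
and `F_q(t)` is the sum of the previous `q` terms for `t > q`. -/
def qbonacci (q : ℕ) : ℕ → ℕ
  | 0 => 1
  | t + 1 =>
    if t + 1 ≤ q then 2 ^ t
    else ∑ i ∈ Finset.range q, qbonacci q (t - i)
  decreasing_by exact Nat.lt_succ_of_le (Nat.sub_le t i)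

/-- The length-`t` word cycling through the alphabet `{0, 1, ..., q-1}`. -/
def cyc (q t : ℕ) : List ℕ := (List.range t).map (· % q)

/-- The alternating binary word `0,1,0,1,...` of length `t` (A=0, C=1). -/
def alt (t : ℕ) : List ℕ := (List.range t).map (· % 2)

/-- `tau q x` is the least `s` such that `x` is a subsequence of `cyc q s`. -/
noncomputable def tau (q : ℕ) (x : List ℕ) : ℕ := sInf {s | x <+ cyc q s}

/-! ### Auxiliary machinery -/

/-- Alternating word of length `t` starting at parity `p`. -/
def altp (p t : ℕ) : List ℕ := (List.range t).map (fun i => (i + p) % 2)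

/-- Minimal length of an alternating word starting at parity `p` containing `x`. -/
def cost : ℕ → List ℕ → ℕ
  | _, [] => 0
  | p, a :: x => (if a % 2 = p % 2 then 1 else 2) + cost (a + 1) x

/-- Positions (starting from `j`) where embedding `x` incurs a penalty. -/
def pens : ℕ → ℕ → List ℕ → Finset ℕ
  | _, _, [] => ∅
  | p, j, a :: x =>
      if a % 2 = p % 2 then pens (a + 1) (j + 1) x
      else insert j (pens (a + 1) (j + 1) x)

/-- Decode a set of penalty positions back into a binary word. -/
def dec (p j : ℕ) : ℕ → Finset ℕ → List ℕ
  | 0, _ => []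
  | m + 1, T =>
      ((p + (if j ∈ T then 1 else 0)) % 2) ::
        dec (p + (if j ∈ T then 1 else 0) + 1) (j + 1) m T

lemma alt_eq (t : ℕ) : alt t = altp 0 t := by simp [alt, altp]

lemma altp_succ (p t : ℕ) : altp p (t + 1) = p % 2 :: altp (p + 1) t := by
  simp only [altp, List.range_succ_eq_map, List.map_cons, List.map_map]
  congr 1
  · omega
  · apply List.map_congr_left
    intro i _
    simp only [Function.comp_apply, Nat.succ_eq_add_one]
    omega

lemma mem_altp {a p t : ℕ} (ha : a ∈ altp p t) : a < 2 := by
  simp [altp] at ha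
  obtain ⟨i, _, rfl⟩ := ha
  omega

lemma cost_congr {p q : ℕ} (hpq : p % 2 = q % 2) (x : List ℕ) :
    cost p x = cost q x := by
  cases x with
  | nil => rfl
  | cons a x => simp [cost, hpq]

lemma cost_le (p q : ℕ) (x : List ℕ) : cost p x ≤ 1 + cost q x := by
  cases x with
  | nil => simp [cost]
  | cons a x => simp only [cost]; split_ifs <;> omega

lemma sub_iff : ∀ (t p : ℕ) (x : List ℕ), (∀ a ∈ x, a < 2) →
    (x <+ altp p t ↔ cost p x ≤ t) := by
  intro t
  induction t with
  | zero =>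
    intro p x hx
    simp only [altp, List.range_zero, List.map_nil, List.sublist_nil]
    constructor
    · rintro rfl; simp [cost]
    · intro hc
      cases x with
      | nil => rfl
      | cons a x => simp only [cost] at hc; split_ifs at hc <;> omega
  | succ t ih =>
    intro p x hx
    rw [altp_succ]
    cases x with
    | nil => simp [cost]
    | cons a x =>
      have ha : a < 2 := hx a (by simp)
      have hx' : ∀ b ∈ x, b < 2 := fun b hb => hx b (by simp [hb])
      constructor
      · intro hs
        rcases List.sublist_cons_iff.1 hs with hs' | ⟨rr, heq, hs'⟩
        · have h1 := (ih (p + 1) (a :: x) hx).1 hs'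
          have h2 := cost_le p (p + 1) (a :: x)
          omega
        · injection heq with h1 h2
          subst h2
          have h3 := (ih (p + 1) x hx').1 hs'
          have h4 : cost (a + 1) x = cost (p + 1) x := cost_congr (by omega) x
          simp only [cost, if_pos (show a % 2 = p % 2 by omega)]
          omega
      · intro hc
        by_cases hap : a % 2 = p % 2
        · simp only [cost, if_pos hap] at hc
          have h4 : cost (a + 1) x = cost (p + 1) x := cost_congr (by omega) x
          have h5 : cost (p + 1) x ≤ t := by omega
          have ha' : a = p % 2 := by omega
          rw [ha']
          exact List.Sublist.cons₂ _ ((ih (p + 1) x hx').2 h5)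
        · have h5 : cost (p + 1) (a :: x) ≤ t := by
            simp only [cost, if_neg hap] at hc
            have h6 : a % 2 = (p + 1) % 2 := by omega
            simp only [cost, if_pos h6]
            omega
          exact List.Sublist.cons _ ((ih (p + 1) (a :: x) hx).2 h5)

lemma pens_lb : ∀ (x : List ℕ) (p j k : ℕ), k ∈ pens p j x → j ≤ k := by
  intro x
  induction x with
  | nil => intro p j k hk; simp [pens] at hk
  | cons a x ih =>
    intro p j k hk
    simp only [pens] at hk
    split_ifs at hk with hcond
    · have := ih (a + 1) (j + 1) k hk; omega
    · rcases Finset.mem_insert.1 hk with rfl | hk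
      · exact le_refl _
      · have := ih (a + 1) (j + 1) k hk; omega

lemma pens_ub : ∀ (x : List ℕ) (p j k : ℕ), k ∈ pens p j x → k < j + x.length := by
  intro x
  induction x with
  | nil => intro p j k hk; simp [pens] at hk
  | cons a x ih =>
    intro p j k hk
    simp only [pens] at hk
    split_ifs at hk with hcond
    · have := ih (a + 1) (j + 1) k hk; simp only [List.length_cons]; omega
    · rcases Finset.mem_insert.1 hk with rfl | hk
      · simp only [List.length_cons]; omega
      · have := ih (a + 1) (j + 1) k hk; simp only [List.length_cons]; omega

lemma pens_congr : ∀ (x : List ℕ) (p q j : ℕ), p % 2 = q % 2 →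
    pens p j x = pens q j x := by
  intro x p q j h
  cases x with
  | nil => rfl
  | cons a x => simp only [pens, h]

lemma cost_eq : ∀ (x : List ℕ) (p j : ℕ),
    cost p x = x.length + (pens p j x).card := by
  intro x
  induction x with
  | nil => intro p j; simp [cost, pens]
  | cons a x ih =>
    intro p j
    simp only [cost, pens]
    split_ifs with hcond
    · rw [ih (a + 1) (j + 1)]; simp only [List.length_cons]; omega
    · have hj : j ∉ pens (a + 1) (j + 1) x := fun hmem => by
        have := pens_lb x (a + 1) (j + 1) j hmem; omega
      rw [Finset.card_insert_of_notMem hj, ih (a + 1) (j + 1)]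
      simp only [List.length_cons]; omega

lemma dec_congr : ∀ (m p q j : ℕ) (T : Finset ℕ), p % 2 = q % 2 →
    dec p j m T = dec q j m T := by
  intro m
  induction m with
  | zero => intros; rfl
  | succ m ih =>
    intro p q j T hpq
    by_cases hj : j ∈ T
    · simp only [dec, if_pos hj]
      rw [ih (p + 1 + 1) (q + 1 + 1) (j + 1) T (by omega)]
      congr 1
      all_goals omega
    · simp only [dec, if_neg hj]
      rw [ih (p + 0 + 1) (q + 0 + 1) (j + 1) T (by omega)]
      congr 1
      all_goals omega

lemma dec_length : ∀ (m p j : ℕ) (T : Finset ℕ), (dec p j m T).length = m := by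
  intro m
  induction m with
  | zero => intro p j T; rfl
  | succ m ih => intro p j T; simp [dec, ih]

lemma dec_lt : ∀ (m p j : ℕ) (T : Finset ℕ) (a : ℕ), a ∈ dec p j m T → a < 2 := by
  intro m
  induction m with
  | zero => intro p j T a ha; simp [dec] at ha
  | succ m ih =>
    intro p j T a ha
    simp only [dec, List.mem_cons] at ha
    rcases ha with rfl | ha
    · omega
    · exact ih _ _ _ _ ha

lemma dec_filter : ∀ (m p j : ℕ) (T T' : Finset ℕ),
    (∀ i, j ≤ i → (i ∈ T ↔ i ∈ T')) → dec p j m T = dec p j m T' := by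
  intro m
  induction m with
  | zero => intros; rfl
  | succ m ih =>
    intro p j T T' hTT
    have hj : (j ∈ T) = (j ∈ T') := propext (hTT j le_rfl)
    simp only [dec, hj]
    congr 1
    exact ih _ _ T T' (fun i hi => hTT i (by omega))

lemma left_inv_aux : ∀ (x : List ℕ) (p j : ℕ), (∀ a ∈ x, a < 2) →
    dec p j x.length (pens p j x) = x := by
  intro x
  induction x with
  | nil => intros; rfl
  | cons a x ih =>
    intro p j hx
    have ha : a < 2 := hx a (by simp)
    have hx' : ∀ b ∈ x, b < 2 := fun b hb => hx b (by simp [hb])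
    by_cases hap : a % 2 = p % 2
    · have hj : j ∉ pens (a + 1) (j + 1) x := fun hmem => by
        have := pens_lb x (a + 1) (j + 1) j hmem; omega
      simp only [pens, if_pos hap, List.length_cons, dec, if_neg hj]
      congr 1
      · omega
      · rw [dec_congr x.length (p + 0 + 1) (a + 1) (j + 1) _ (by omega)]
        exact ih (a + 1) (j + 1) hx'
    · have hj' : j ∈ insert j (pens (a + 1) (j + 1) x) := Finset.mem_insert_self _ _
      simp only [pens, if_neg hap, List.length_cons, dec, if_pos hj']
      congr 1
      · omega
      · rw [dec_filter x.length (p + 1 + 1) (j + 1)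
            (insert j (pens (a + 1) (j + 1) x)) (pens (a + 1) (j + 1) x)
            (fun i hi => ⟨fun hmem => by
              rcases Finset.mem_insert.1 hmem with rfl | hh
              · omega
              · exact hh, fun hh => Finset.mem_insert_of_mem hh⟩)]
        rw [dec_congr x.length (p + 1 + 1) (a + 1) (j + 1) _ (by omega)]
        exact ih (a + 1) (j + 1) hx'

lemma right_inv_aux : ∀ (m p j : ℕ) (T : Finset ℕ),
    pens p j (dec p j m T) = T.filter (fun k => j ≤ k ∧ k < j + m) := by
  intro m
  induction m with
  | zero =>
    intro p j T
    show pens p j [] = _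
    ext k
    simp only [pens, Finset.notMem_empty, Finset.mem_filter, false_iff]
    rintro ⟨_, h1, h2⟩
    omega
  | succ m ih =>
    intro p j T
    by_cases hj : j ∈ T
    · simp only [dec, if_pos hj]
      have hne : ¬ ((p + 1) % 2 % 2 = p % 2) := by omega
      simp only [pens, if_neg hne]
      rw [pens_congr _ ((p + 1) % 2 + 1) (p + 1 + 1) (j + 1) (by omega),
        ih (p + 1 + 1) (j + 1) T]
      ext k
      simp only [Finset.mem_insert, Finset.mem_filter]
      constructor
      · rintro (rfl | ⟨hk, h1, h2⟩)
        · exact ⟨hj, le_rfl, by omega⟩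
        · exact ⟨hk, by omega, by omega⟩
      · rintro ⟨hk, h1, h2⟩
        by_cases hkj : k = j
        · exact Or.inl hkj
        · exact Or.inr ⟨hk, by omega, by omega⟩
    · simp only [dec, if_neg hj]
      have heq : (p + 0) % 2 % 2 = p % 2 := by omega
      simp only [pens, if_pos heq]
      rw [pens_congr _ ((p + 0) % 2 + 1) (p + 0 + 1) (j + 1) (by omega),
        ih (p + 0 + 1) (j + 1) T]
      ext k
      simp only [Finset.mem_filter]
      constructor
      · rintro ⟨hk, h1, h2⟩; exact ⟨hk, by omega, by omega⟩
      · rintro ⟨hk, h1, h2⟩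
        have hkj : k ≠ j := fun e => hj (e ▸ hk)
        exact ⟨hk, by omega, by omega⟩

theorem stmt7 (t r : ℕ) (h : r ≤ t - r) :
    {x : List ℕ | x <+ alt t ∧ x.length = t - r}.ncard
      = ∑ i ∈ Finset.range (r + 1), Nat.choose (t - r) i := by
  classical
  have hrt : r ≤ t := le_trans h (Nat.sub_le t r)
  set m := t - r with hm
  have hmr : m + r = t := by omega
  have hset : {x : List ℕ | x <+ alt t ∧ x.length = m}
      = ↑(((alt t).sublists.toFinset).filter (fun x => x.length = m)) := by
    ext x
    simp [List.mem_sublists]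
  rw [hset, Set.ncard_coe_finset]
  have hmemB : ∀ T : Finset ℕ,
      T ∈ (Finset.range (r + 1)).biUnion (fun i => (Finset.range m).powersetCard i)
      ↔ T ⊆ Finset.range m ∧ T.card ≤ r := by
    intro T
    simp only [Finset.mem_biUnion, Finset.mem_range, Finset.mem_powersetCard]
    constructor
    · rintro ⟨i, hi, hs, hc⟩; exact ⟨hs, by omega⟩
    · rintro ⟨hs, hc⟩; exact ⟨T.card, by omega, hs, rfl⟩
  have hB : ((Finset.range (r + 1)).biUnion
        (fun i => (Finset.range m).powersetCard i)).card
      = ∑ i ∈ Finset.range (r + 1), Nat.choose m i := by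
    rw [Finset.card_biUnion]
    · exact Finset.sum_congr rfl
        (fun i _ => by rw [Finset.card_powersetCard, Finset.card_range])
    · intro i _ k _ hik
      rw [Function.onFun, Finset.disjoint_left]
      intro T hTi hTk
      rw [Finset.mem_powersetCard] at hTi hTk
      exact hik (by omega)
  rw [← hB]
  apply Finset.card_bij' (fun x _ => pens 0 0 x) (fun T _ => dec 0 0 m T)
  · intro x hx
    simp only [Finset.mem_filter, List.mem_toFinset, List.mem_sublists] at hx
    obtain ⟨hs, hl⟩ := hx
    have hx2 : ∀ a ∈ x, a < 2 := fun a ha => mem_altp (alt_eq t ▸ hs.subset ha)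
    rw [hmemB]
    constructor
    · intro k hk
      rw [Finset.mem_range]
      have := pens_ub x 0 0 k hk
      omega
    · have hc : cost 0 x ≤ t := (sub_iff t 0 x hx2).1 (by rwa [← alt_eq])
      have he := cost_eq x 0 0
      omega
  · intro T hT
    rw [hmemB] at hT
    obtain ⟨hsub, hcard⟩ := hT
    have hfil : T.filter (fun k => 0 ≤ k ∧ k < 0 + m) = T := by
      apply Finset.filter_true_of_mem
      intro k hk
      have := Finset.mem_range.1 (hsub hk)
      omega
    simp only [Finset.mem_filter, List.mem_toFinset, List.mem_sublists]
    refine ⟨?_, dec_length m 0 0 T⟩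
    rw [alt_eq, sub_iff t 0 _ (fun a ha => dec_lt m 0 0 T a ha)]
    rw [cost_eq _ 0 0, right_inv_aux m 0 0 T, hfil, dec_length]
    omega
  · intro x hx
    simp only [Finset.mem_filter, List.mem_toFinset, List.mem_sublists] at hx
    have hx2 : ∀ a ∈ x, a < 2 := fun a ha => mem_altp (alt_eq t ▸ hx.1.subset ha)
    rw [← hx.2]
    exact left_inv_aux x 0 0 hx2
  · intro T hT
    rw [hmemB] at hT
    rw [right_inv_aux m 0 0 T]
    apply Finset.filter_true_of_mem
    intro k hk
    have := Finset.mem_range.1 (hT.1 hk)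
    omega
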